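/- arXiv:1905.06448 — 3 statements merged into one kernel-verified Lean document; each statement's English description precedes it below -/
import Mathlib

section
/- For any real normed space X, any x, y ∈ X with ‖x‖ > 0, any norming functional F_x of x, and any λ ∈ ℝ: ‖x − λ y‖ ≤ ‖x‖ − λ F_x(y) + 2‖x‖ ρ(|λ|·‖y‖/‖x‖), where ρ is the modulus of smoothness of X. -/
/-- The modulus of smoothness of a real normed space:
`ρ(u) = sup_{‖x‖=‖y‖=1} (‖x+uy‖+‖x−uy‖)/2 − 1`. -/
noncomputable def modulusOfSmoothness (X : Type*) [NormedAddCommGroup X]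
    [NormedSpace ℝ X] (u : ℝ) : ℝ :=
  sSup {r : ℝ | ∃ x y : X, ‖x‖ = 1 ∧ ‖y‖ = 1 ∧
    r = (‖x + u • y‖ + ‖x - u • y‖) / 2 - 1}

lemma rho_ge {X : Type*} [NormedAddCommGroup X] [NormedSpace ℝ X]
    (u : ℝ) (a b : X) (ha : ‖a‖ = 1) (hb : ‖b‖ = 1) :
    (‖a + u • b‖ + ‖a - u • b‖) / 2 - 1 ≤ modulusOfSmoothness X u := by
  apply le_csSup
  · refine ⟨|u|, ?_⟩
    rintro r ⟨p, q, hp, hq, rfl⟩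
    have h1 := norm_add_le p (u • q)
    have h2 := norm_sub_le p (u • q)
    have h3 : ‖u • q‖ = |u| * ‖q‖ := by
      rw [norm_smul, Real.norm_eq_abs]
    rw [h3, hp, hq] at h1 h2
    linarith
  · exact ⟨a, b, ha, hb, rfl⟩

theorem smoothness_inequality
    {X : Type*} [NormedAddCommGroup X] [NormedSpace ℝ X]
    (x y : X) (hx : 0 < ‖x‖)
    (F : X →L[ℝ] ℝ) (hF : ‖F‖ = 1) (hFx : F x = ‖x‖)
    (l : ℝ) :
    ‖x - l • y‖ ≤ ‖x‖ - l * F y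
      + 2 * ‖x‖ * modulusOfSmoothness X (|l| * ‖y‖ / ‖x‖) := by
  set u : ℝ := |l| * ‖y‖ / ‖x‖ with hu
  have hxne : ‖x‖ ≠ 0 := ne_of_gt hx
  have ha : ‖(‖x‖⁻¹ • x)‖ = 1 := by
    rw [norm_smul, Real.norm_eq_abs, abs_inv, abs_of_pos hx, inv_mul_cancel₀ hxne]
  by_cases h0 : l * ‖y‖ = 0
  · -- degenerate case: l = 0 or y = 0
    have hu0 : u = 0 := by
      rw [hu]
      rcases mul_eq_zero.1 h0 with h | h
      · rw [h, abs_zero]; ring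
      · rw [h]; ring
    have hly : l • y = 0 := by
      rcases mul_eq_zero.1 h0 with h | h
      · rw [h, zero_smul]
      · rw [norm_eq_zero.1 h, smul_zero]
    have hlFy : l * F y = 0 := by
      rcases mul_eq_zero.1 h0 with h | h
      · rw [h, zero_mul]
      · rw [norm_eq_zero.1 h, map_zero, mul_zero]
    have hrho : 0 ≤ modulusOfSmoothness X u := by
      have h := rho_ge u (‖x‖⁻¹ • x) (‖x‖⁻¹ • x) ha ha
      rw [hu0] at h ⊢
      rw [zero_smul, add_zero, sub_zero, ha] at h
      linarith
    rw [hly, sub_zero, hlFy]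
    nlinarith
  · -- main case
    have hlne : l ≠ 0 := fun h => h0 (by rw [h, zero_mul])
    have hyne : ‖y‖ ≠ 0 := fun h => h0 (by rw [h, mul_zero])
    have hlabs : |l| ≠ 0 := abs_ne_zero.2 hlne
    set b : X := (l / (|l| * ‖y‖)) • y with hb
    have hbnorm : ‖b‖ = 1 := by
      rw [hb, norm_smul, Real.norm_eq_abs, abs_div, abs_mul, abs_abs,
        abs_of_nonneg (norm_nonneg y)]
      field_simp
    have hub : u • b = (l / ‖x‖) • y := by
      rw [hb, smul_smul, hu]
      congr 1
      field_simp
    have key := rho_ge u (‖x‖⁻¹ • x) b ha hbnorm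
    have hplus : ‖x‖⁻¹ • x + u • b = ‖x‖⁻¹ • (x + l • y) := by
      rw [hub, smul_add, smul_smul]
      congr 2
      field_simp
    have hminus : ‖x‖⁻¹ • x - u • b = ‖x‖⁻¹ • (x - l • y) := by
      rw [hub, smul_sub, smul_smul]
      congr 2
      field_simp
    rw [hplus, hminus, norm_smul, norm_smul, Real.norm_eq_abs, abs_inv,
      abs_of_pos hx] at key
    -- key : (‖x‖⁻¹ * ‖x + l•y‖ + ‖x‖⁻¹ * ‖x - l•y‖)/2 - 1 ≤ ρ u
    have hFbound : ‖x‖ + l * F y ≤ ‖x + l • y‖ := by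
      have h1 := F.le_opNorm (x + l • y)
      rw [hF, one_mul, Real.norm_eq_abs] at h1
      have h2 : F (x + l • y) ≤ ‖x + l • y‖ := (le_abs_self _).trans h1
      rw [map_add, map_smul, hFx] at h2
      simpa [smul_eq_mul] using h2
    have h3 : ‖x‖⁻¹ * ‖x + l • y‖ + ‖x‖⁻¹ * ‖x - l • y‖
        ≤ 2 * (1 + modulusOfSmoothness X u) := by linarith
    have h4 := mul_le_mul_of_nonneg_left h3 hx.le
    rw [mul_add, ← mul_assoc, ← mul_assoc, mul_inv_cancel₀ hxne, one_mul,
      one_mul] at h4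
    linarith
end

section
/- Let X be a real normed space whose modulus of smoothness satisfies ρ(u) ≤ c u^q for some c > 0 and 1 < q ≤ 2. Let g be a unit vector, F_g a norming functional, and r(f) = f − F_g(f) g. Then for every unit vector f, ‖r(f)‖ ≤ 1 + μ, where μ ∈ (0, 1] satisfies 1 + μ = 2μ ρ(1/μ), and in particular ‖r(f)‖ ≤ min{1 + μ_q, 2} where μ_q > 0 solves 1 + μ_q = 2c μ_q^{1−q}. -/
section Aux

variable {X : Type*} [NormedAddCommGroup X] [NormedSpace ℝ X]

lemma mos_bddAbove (u : ℝ) : BddAbove {r : ℝ | ∃ x y : X, ‖x‖ = 1 ∧ ‖y‖ = 1 ∧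
    r = (‖x + u • y‖ + ‖x - u • y‖) / 2 - 1} := by
  refine ⟨|u|, ?_⟩
  rintro r ⟨x, y, hx, hy, rfl⟩
  have h1 : ‖x + u • y‖ ≤ 1 + |u| := by
    calc ‖x + u • y‖ ≤ ‖x‖ + ‖u • y‖ := norm_add_le _ _
    _ = 1 + |u| := by rw [hx, norm_smul, hy, Real.norm_eq_abs, mul_one]
  have h2 : ‖x - u • y‖ ≤ 1 + |u| := by
    calc ‖x - u • y‖ ≤ ‖x‖ + ‖u • y‖ := norm_sub_le _ _
    _ = 1 + |u| := by rw [hx, norm_smul, hy, Real.norm_eq_abs, mul_one]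
  linarith

lemma mos_mem {x y : X} (hx : ‖x‖ = 1) (hy : ‖y‖ = 1) (u : ℝ) :
    (‖x + u • y‖ + ‖x - u • y‖) / 2 - 1 ≤ modulusOfSmoothness X u :=
  le_csSup (mos_bddAbove u) ⟨x, y, hx, hy, rfl⟩

lemma norm_decomp {s t : ℝ} (hs : 0 ≤ s) (hst : s ≤ t) (ht : 0 < t)
    {x : X} (hx : ‖x‖ = 1) (z : X) :
    ‖x + s • z‖ ≤ (1 - s / t) + (s / t) * ‖x + t • z‖ := by
  have hl0 : 0 ≤ s / t := by positivity
  have hl1 : s / t ≤ 1 := by rw [div_le_one ht]; exact hst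
  calc ‖x + s • z‖ = ‖(1 - s / t) • x + (s / t) • (x + t • z)‖ := by
        rw [smul_add, smul_smul, div_mul_cancel₀ _ ht.ne', sub_smul, one_smul]
        congr 1
        abel
    _ ≤ ‖(1 - s / t) • x‖ + ‖(s / t) • (x + t • z)‖ := norm_add_le _ _
    _ = (1 - s / t) + (s / t) * ‖x + t • z‖ := by
        rw [norm_smul, norm_smul, hx, Real.norm_eq_abs, Real.norm_eq_abs,
          abs_of_nonneg hl0, abs_of_nonneg (by linarith), mul_one]

lemma mos_ratio {g : X} (hg : ‖g‖ = 1) {s t : ℝ} (hs : 0 < s) (hst : s ≤ t) :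
    modulusOfSmoothness X s ≤ (s / t) * modulusOfSmoothness X t := by
  have ht : 0 < t := lt_of_lt_of_le hs hst
  have hl0 : 0 ≤ s / t := by positivity
  rw [modulusOfSmoothness]
  refine csSup_le ⟨(‖g + s • g‖ + ‖g - s • g‖) / 2 - 1, ⟨g, g, hg, hg, rfl⟩⟩ ?_
  rintro r ⟨x, y, hx, hy, rfl⟩
  have h1 := norm_decomp hs.le hst ht hx y
  have h2 := norm_decomp hs.le hst ht hx (-y)
  rw [smul_neg, ← sub_eq_add_neg, smul_neg, ← sub_eq_add_neg] at h2
  have h3 := mos_mem hx hy t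
  have h4 := mul_le_mul_of_nonneg_left h3 hl0
  linarith

end Aux

theorem one_dim_remainder_bound_power_type
    {X : Type*} [NormedAddCommGroup X] [NormedSpace ℝ X]
    (c q : ℝ) (hc : 0 < c) (hq : 1 < q) (hq2 : q ≤ 2)
    (hρ : ∀ u : ℝ, 0 ≤ u → modulusOfSmoothness X u ≤ c * u ^ q)
    (g : X) (hg : ‖g‖ = 1) (F : X →L[ℝ] ℝ) (hF : ‖F‖ = 1) (hFg : F g = 1)
    (f : X) (hf : ‖f‖ = 1)
    (μ : ℝ) (hμ : μ ∈ Set.Ioc (0 : ℝ) 1)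
    (hμeq : 1 + μ = 2 * μ * modulusOfSmoothness X (1 / μ))
    (μq : ℝ) (hμq : 0 < μq)
    (hμqeq : 1 + μq = 2 * c * μq ^ (1 - q)) :
    ‖f - F f • g‖ ≤ 1 + μ ∧ ‖f - F f • g‖ ≤ min (1 + μq) 2 := by
  obtain ⟨hμ0, hμ1⟩ := hμ
  set α := F f with hα
  have habs : |α| ≤ 1 := by
    have := F.le_opNorm f
    rw [hF, hf, one_mul, Real.norm_eq_abs] at this
    exact this
  have htri : ‖f - α • g‖ ≤ 1 + |α| := by
    calc ‖f - α • g‖ ≤ ‖f‖ + ‖α • g‖ := norm_sub_le _ _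
    _ = 1 + |α| := by rw [hf, norm_smul, hg, Real.norm_eq_abs, mul_one]
  have hkey : ∀ _ : α ≠ 0, ‖f - α • g‖ ≤ 2 * |α| * modulusOfSmoothness X (1 / |α|) := by
    intro hα0
    have ha : 0 < |α| := abs_pos.mpr hα0
    set a := |α| with hadef
    set ε : ℝ := a / α with hε
    have hεα : ε * α = a := by rw [hε]; field_simp
    have hε2 : ε * ε = 1 := by
      rw [hε]; field_simp; exact sq_abs α
    have hεa : ε * a = α := by
      rw [hε]; field_simp; exact sq_abs α
    set y : X := ε • f with hy
    have hεabs : |ε| = 1 := by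
      rw [hε, abs_div, abs_abs, div_self (abs_ne_zero.mpr hα0)]
    have hny : ‖y‖ = 1 := by rw [hy, norm_smul, Real.norm_eq_abs, hεabs, hf, mul_one]
    have hFplus : F (g + (1 / a) • y) = 2 := by
      rw [map_add, hFg, hy, map_smul, map_smul, ← hα, smul_eq_mul, smul_eq_mul, hεα]
      field_simp
      norm_num
    have hplus : (2 : ℝ) ≤ ‖g + (1 / a) • y‖ := by
      rw [← hFplus]
      calc F (g + (1 / a) • y) ≤ |F (g + (1 / a) • y)| := le_abs_self _
      _ ≤ ‖F‖ * ‖g + (1 / a) • y‖ := by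
          rw [← Real.norm_eq_abs]; exact F.le_opNorm _
      _ = ‖g + (1 / a) • y‖ := by rw [hF, one_mul]
    have hmem := mos_mem hg hny (1 / a)
    have hminus : ‖g - (1 / a) • y‖ ≤ 2 * modulusOfSmoothness X (1 / a) := by linarith
    have e1 : a • (g - (1 / a) • y) = a • g - ε • f := by
      rw [smul_sub, hy, smul_smul, mul_one_div, div_self ha.ne', one_smul]
    have e2 : ε • (a • g - ε • f) = α • g - f := by
      rw [smul_sub, smul_smul, smul_smul, hεa, hε2, one_smul]
    have hrepr : ‖f - α • g‖ = a * ‖g - (1 / a) • y‖ := by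
      calc ‖f - α • g‖ = ‖α • g - f‖ := norm_sub_rev _ _
      _ = ‖ε • (a • g - ε • f)‖ := by rw [e2]
      _ = |ε| * ‖a • g - ε • f‖ := by rw [norm_smul, Real.norm_eq_abs]
      _ = ‖a • (g - (1 / a) • y)‖ := by rw [hεabs, one_mul, e1]
      _ = a * ‖g - (1 / a) • y‖ := by
          rw [norm_smul, Real.norm_eq_abs, hadef, abs_abs]
    rw [hrepr]
    calc a * ‖g - (1 / a) • y‖ ≤ a * (2 * modulusOfSmoothness X (1 / a)) :=
          mul_le_mul_of_nonneg_left hminus ha.le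
    _ = 2 * a * modulusOfSmoothness X (1 / a) := by ring
  constructor
  · by_cases hcase : |α| ≤ μ
    · linarith
    · push_neg at hcase
      have hα0 : α ≠ 0 := by
        intro h; rw [h, abs_zero] at hcase; linarith
      have ha : 0 < |α| := abs_pos.mpr hα0
      have hr := mos_ratio hg (s := 1 / |α|) (t := 1 / μ) (by positivity)
        (one_div_le_one_div_of_le hμ0 hcase.le)
      have hdiv : (1 / |α|) / (1 / μ) = μ / |α| := by field_simp
      rw [hdiv] at hr
      have hρpos : 0 ≤ modulusOfSmoothness X (1 / μ) := by nlinarith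
      calc ‖f - α • g‖ ≤ 2 * |α| * modulusOfSmoothness X (1 / |α|) := hkey hα0
      _ ≤ 2 * |α| * (μ / |α| * modulusOfSmoothness X (1 / μ)) := by
          apply mul_le_mul_of_nonneg_left hr (by positivity)
      _ = 2 * μ * modulusOfSmoothness X (1 / μ) := by field_simp
      _ = 1 + μ := hμeq.symm
  · refine le_min ?_ (by linarith)
    by_cases hcase : |α| ≤ μq
    · linarith
    · push_neg at hcase
      have hα0 : α ≠ 0 := by
        intro h; rw [h, abs_zero] at hcase; linarith
      have ha : 0 < |α| := abs_pos.mpr hα0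
      have hρb := hρ (1 / |α|) (by positivity)
      have hpow : 2 * |α| * (c * (1 / |α|) ^ q) = 2 * c * |α| ^ (1 - q) := by
        rw [one_div, Real.inv_rpow (abs_nonneg α), Real.rpow_sub ha, Real.rpow_one]
        field_simp
      have h1q : |α| ^ (1 - q) ≤ μq ^ (1 - q) :=
        Real.rpow_le_rpow_of_nonpos hμq hcase.le (by linarith)
      calc ‖f - α • g‖ ≤ 2 * |α| * modulusOfSmoothness X (1 / |α|) := hkey hα0
      _ ≤ 2 * |α| * (c * (1 / |α|) ^ q) := by
          apply mul_le_mul_of_nonneg_left hρb (by positivity)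
      _ = 2 * c * |α| ^ (1 - q) := hpow
      _ ≤ 2 * c * μq ^ (1 - q) := by nlinarith
      _ = 1 + μq := hμqeq.symm
end

section
/- Let A = (a_{ij}) be an n×n real lower-triangular matrix with rows a₀,…,a_{n−1} ∈ ℝⁿ, let W_m be an m-dimensional subspace of ℝⁿ with 0 < m < n, and let P_m be the orthogonal projection onto W_m. Then ∏_{i=0}^{n−1} a_{ii}² ≤ ( (1/m) Σ_{i=0}^{n−1} ‖P_m a_i‖₂² )^m · ( (1/(n−m)) Σ_{i=0}^{n−1} ‖a_i − P_m a_i‖₂² )^{n−m}. -/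
open Matrix
local instance (n : ℕ) : WellFoundedLT (Fin n) := inferInstance

open Finset in
lemma pilp_norm_sq {ι : Type*} [Fintype ι] (x : EuclideanSpace ℝ ι) : ‖x‖ ^ 2 = ∑ i, x i ^ 2 := by
  rw [EuclideanSpace.norm_eq, Real.sq_sqrt (by positivity)]
  simp [Real.norm_eq_abs, sq_abs]

lemma normSq_proj {E : Type*} [NormedAddCommGroup E] [InnerProductSpace ℝ E]
    {ι : Type*} [Fintype ι]
    (U : Submodule ℝ E) [CompleteSpace U] (b : OrthonormalBasis ι ℝ U) (x : E) :
    ‖(Submodule.orthogonalProjectionOnto U x : E)‖ ^ 2 = ∑ i, (inner ℝ ((b i : E)) x : ℝ) ^ 2 := by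
  have h1 : ‖(Submodule.orthogonalProjectionOnto U x : E)‖ = ‖Submodule.orthogonalProjectionOnto U x‖ := rfl
  rw [h1, ← b.repr.norm_map (Submodule.orthogonalProjectionOnto U x), pilp_norm_sq]
  refine Finset.sum_congr rfl fun i _ => ?_
  rw [b.repr_apply_apply, Submodule.inner_orthogonalProjectionOnto_eq_of_mem_left]

open Finset in
lemma hadamard_cols {n : ℕ} (v : Fin n → EuclideanSpace ℝ (Fin n)) :
    (Matrix.of fun i j => v j i).det ^ 2 ≤ ∏ j, ‖v j‖ ^ 2 := by
  classical
  set g : Fin n → EuclideanSpace ℝ (Fin n) := InnerProductSpace.gramSchmidt ℝ v with hg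
  set c : Fin n → Fin n → ℝ := fun k j => (inner ℝ (g k) (v j) : ℝ) / ((‖g k‖ : ℝ)) ^ 2 with hc
  set T : Matrix (Fin n) (Fin n) ℝ :=
    Matrix.of (fun k j => if k = j then (1:ℝ) else if k < j then c k j else 0) with hT
  set G : Matrix (Fin n) (Fin n) ℝ := Matrix.of (fun i k => g k i) with hG
  have hvj : ∀ j, v j = g j + ∑ k ∈ Iio j, c k j • g k := by
    intro j
    have hdef := InnerProductSpace.gramSchmidt_def'' ℝ v j
    convert hdef using 3
    rfl
  have hMGT : (Matrix.of fun i j => v j i) = G * T := by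
    ext i j
    have hvji : v j i = g j i + ∑ k ∈ Iio j, c k j * g k i := by
      conv_lhs => rw [hvj j]
      rw [PiLp.add_apply, WithLp.ofLp_sum, Finset.sum_apply]
      simp [PiLp.smul_apply]
    show v j i = ∑ k, G i k * T k j
    rw [hvji, ← Finset.add_sum_erase _ _ (Finset.mem_univ j)]
    have h1 : G i j * T j j = g j i := by simp [hT, hG]
    have h2 : ∑ k ∈ univ.erase j, G i k * T k j = ∑ k ∈ Iio j, c k j * g k i := by
      rw [← Finset.sum_subset (s₁ := Iio j) (s₂ := univ.erase j)
        (fun k hk => by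
          simp only [Finset.mem_erase, Finset.mem_univ, and_true]
          exact (Finset.mem_Iio.1 hk).ne)
        (fun k hmem hk => by
          have h3 : ¬ k < j := fun h => hk (Finset.mem_Iio.2 h)
          have h4 : k ≠ j := (Finset.mem_erase.1 hmem).1
          simp [hT, h3, h4])]
      refine Finset.sum_congr rfl fun k hk => ?_
      have h5 : k < j := Finset.mem_Iio.1 hk
      simp [hT, hG, h5, h5.ne, mul_comm]
    rw [h1, h2]
  have hdetT : T.det = 1 := by
    have hbt : T.BlockTriangular id := by
      intro k j h
      have h1 : k ≠ j := (ne_of_lt h).symm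
      have h2 : ¬ (k < j) := not_lt.2 h.le
      simp [hT, h1, h2]
    rw [Matrix.det_of_upperTriangular hbt]
    have : ∀ k : Fin n, T k k = 1 := fun k => by simp [hT]
    simp [this]
  have hip : ∀ k l, ∑ i, g k i * g l i = (inner ℝ (g k) (g l) : ℝ) := by
    intro k l
    rw [PiLp.inner_apply]
    simp [RCLike.inner_apply, mul_comm]
  have hGTG : Gᵀ * G = Matrix.diagonal fun k => ‖g k‖ ^ 2 := by
    ext k l
    show ∑ i, G i k * G i l = _
    have : ∑ i, G i k * G i l = (inner ℝ (g k) (g l) : ℝ) := by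
      rw [← hip k l]; rfl
    rw [this]
    by_cases h : k = l
    · subst h
      rw [real_inner_self_eq_norm_sq]
      simp
    · rw [InnerProductSpace.gramSchmidt_orthogonal ℝ v h]
      simp [Matrix.diagonal_apply_ne _ h]
  have hdetG : G.det ^ 2 = ∏ k, ‖g k‖ ^ 2 := by
    have h6 : G.det ^ 2 = (Gᵀ * G).det := by
      rw [Matrix.det_mul, Matrix.det_transpose, sq]
    rw [h6, hGTG, Matrix.det_diagonal]
  have hle : ∀ j, ‖g j‖ ^ 2 ≤ ‖v j‖ ^ 2 := by
    intro j
    have hortho : (inner ℝ (g j) (∑ k ∈ Iio j, c k j • g k) : ℝ) = 0 := by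
      rw [inner_sum]
      refine Finset.sum_eq_zero fun k hk => ?_
      have hkj : k ≠ j := (Finset.mem_Iio.1 hk).ne
      rw [real_inner_smul_right, InnerProductSpace.gramSchmidt_orthogonal ℝ v (Ne.symm hkj)]
      simp
    have h7 : ‖v j‖ ^ 2 = ‖g j‖ ^ 2 + ‖∑ k ∈ Iio j, c k j • g k‖ ^ 2 := by
      rw [hvj j, norm_add_sq_real, hortho]
      ring
    nlinarith [sq_nonneg ‖∑ k ∈ Iio j, c k j • g k‖]
  calc (Matrix.of fun i j => v j i).det ^ 2 = G.det ^ 2 := by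
        rw [hMGT, Matrix.det_mul, hdetT, mul_one]
    _ = ∏ k, ‖g k‖ ^ 2 := hdetG
    _ ≤ ∏ j, ‖v j‖ ^ 2 := Finset.prod_le_prod (fun _ _ => by positivity) (fun j _ => hle j)

lemma amgm_prod_le {ι : Type*} [Fintype ι] (c : ι → ℝ) (hc : ∀ i, 0 ≤ c i)
    (hcard : 0 < Fintype.card ι) :
    ∏ i, c i ≤ ((∑ i, c i) / (Fintype.card ι : ℝ)) ^ (Fintype.card ι) := by
  classical
  set N := Fintype.card ι with hN
  have hN0 : (0:ℝ) < N := by exact_mod_cast hcard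
  have h1 := Real.geom_mean_le_arith_mean (Finset.univ) (fun _ => (1:ℝ)) c
    (fun _ _ => zero_le_one) (by simpa [hN] using hN0) (fun i _ => hc i)
  simp only [Real.rpow_one, one_mul, Finset.sum_const, nsmul_eq_mul, mul_one,
    Finset.card_univ, ← hN] at h1
  have hprod : (0:ℝ) ≤ ∏ i, c i := Finset.prod_nonneg fun i _ => hc i
  calc ∏ i, c i = ((∏ i, c i) ^ ((N:ℝ)⁻¹)) ^ (N:ℕ) := by
        rw [← Real.rpow_natCast ((∏ i, c i) ^ ((N:ℝ)⁻¹)) N, ← Real.rpow_mul hprod,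
          inv_mul_cancel₀ (ne_of_gt hN0), Real.rpow_one]
    _ ≤ ((∑ i, c i) / (N:ℝ)) ^ (N:ℕ) := by
        exact pow_le_pow_left₀ (Real.rpow_nonneg hprod _) h1 N

set_option maxHeartbeats 1000000 in
theorem lower_triangular_projection_inequality
    (n m : ℕ) (hm : 0 < m) (hmn : m < n)
    (A : Matrix (Fin n) (Fin n) ℝ)
    (hA : ∀ i j : Fin n, i < j → A i j = 0)
    (W : Submodule ℝ (EuclideanSpace ℝ (Fin n))) [CompleteSpace W]
    (hW : Module.finrank ℝ W = m) :
    let a : Fin n → EuclideanSpace ℝ (Fin n) :=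
      fun i => (WithLp.equiv 2 (Fin n → ℝ)).symm (A i)
    ∏ i : Fin n, (A i i) ^ 2 ≤
      ((1 / (m : ℝ)) * ∑ i : Fin n, ‖(Submodule.orthogonalProjectionOnto W (a i) : EuclideanSpace ℝ (Fin n))‖ ^ 2) ^ m *
        ((1 / ((n : ℝ) - m)) * ∑ i : Fin n,
          ‖a i - (Submodule.orthogonalProjectionOnto W (a i) : EuclideanSpace ℝ (Fin n))‖ ^ 2) ^ (n - m) := by
  classical
  intro a
  have hW' : Module.finrank ℝ (Wᗮ) = n - m := by
    have h := Submodule.finrank_add_finrank_orthogonal (K := W)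
    rw [finrank_euclideanSpace_fin, hW] at h
    omega
  let bW : OrthonormalBasis (Fin m) ℝ W := (stdOrthonormalBasis ℝ W).reindex (finCongr hW)
  let bO : OrthonormalBasis (Fin (n - m)) ℝ (Wᗮ) :=
    (stdOrthonormalBasis ℝ (Wᗮ)).reindex (finCongr hW')
  let v : (Fin m ⊕ Fin (n - m)) → (EuclideanSpace ℝ (Fin n)) := Sum.elim (fun k => (bW k : (EuclideanSpace ℝ (Fin n)))) (fun k => (bO k : (EuclideanSpace ℝ (Fin n))))
  let e : (Fin m ⊕ Fin (n - m)) ≃ Fin n := finSumFinEquiv.trans (finCongr (by omega))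
  let u : Fin n → (EuclideanSpace ℝ (Fin n)) := fun j => v (e.symm j)
  have hip : ∀ (x y : (EuclideanSpace ℝ (Fin n))), (inner ℝ x y : ℝ) = ∑ k, x k * y k := by
    intro x y
    rw [PiLp.inner_apply]
    simp [RCLike.inner_apply, mul_comm]
  have hv : ∀ x y, (inner ℝ (v x) (v y) : ℝ) = if x = y then 1 else 0 := by
    have hbW := bW.orthonormal
    have hbO := bO.orthonormal
    rw [orthonormal_iff_ite] at hbW hbO
    rintro (x | x) (y | y)
    · have h := hbW x y
      rw [Submodule.coe_inner] at h
      simp only [v, Sum.elim_inl]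
      rw [h]
      by_cases hxy : x = y <;> simp [hxy]
    · simp only [v, Sum.elim_inl, Sum.elim_inr]
      rw [Submodule.inner_right_of_mem_orthogonal (bW x).2 (bO y).2]
      simp
    · simp only [v, Sum.elim_inl, Sum.elim_inr]
      rw [Submodule.inner_left_of_mem_orthogonal (bW y).2 (bO x).2]
      simp
    · have h := hbO x y
      rw [Submodule.coe_inner] at h
      simp only [v, Sum.elim_inr]
      rw [h]
      by_cases hxy : x = y <;> simp [hxy]
  let Um : Matrix (Fin n) (Fin n) ℝ := Matrix.of fun k j => u j k
  have hUtU : Umᵀ * Um = 1 := by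
    ext j j'
    show ∑ k, Um k j * Um k j' = _
    have h1 : ∑ k, Um k j * Um k j' = (inner ℝ (u j) (u j') : ℝ) := (hip (u j) (u j')).symm
    rw [h1]
    show (inner ℝ (v (e.symm j)) (v (e.symm j')) : ℝ) = _
    rw [hv]
    by_cases hjj : j = j'
    · simp [hjj, Matrix.one_apply]
    · have : e.symm j ≠ e.symm j' := fun hc => hjj (e.symm.injective hc)
      simp [this, Matrix.one_apply, hjj]
  have hdetU : Um.det ^ 2 = 1 := by
    have h := congr_arg Matrix.det hUtU
    rwa [Matrix.det_mul, Matrix.det_transpose, ← sq, Matrix.det_one] at h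
  set B : Matrix (Fin n) (Fin n) ℝ := A * Um with hBdef
  have hB : ∀ i j, B i j = (inner ℝ (u j) (a i) : ℝ) := by
    intro i j
    rw [hip]
    show ∑ k, A i k * Um k j = _
    refine Finset.sum_congr rfl fun k _ => ?_
    have e1 : Um k j = u j k := rfl
    have e2 : a i k = A i k := rfl
    rw [e1, e2, mul_comm]
  -- Hadamard
  let w : Fin n → (EuclideanSpace ℝ (Fin n)) := fun j => (WithLp.equiv 2 (Fin n → ℝ)).symm (fun i => B i j)
  have hwB : (Matrix.of fun i j => w j i) = B := by
    ext i j; rfl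
  have hHad : B.det ^ 2 ≤ ∏ j, ‖w j‖ ^ 2 := by
    rw [← hwB]; exact hadamard_cols w
  let c : (Fin m ⊕ Fin (n - m)) → ℝ := fun x => ∑ i, (inner ℝ (v x) (a i) : ℝ) ^ 2
  have hwc : ∀ j, ‖w j‖ ^ 2 = c (e.symm j) := by
    intro j
    rw [pilp_norm_sq]
    refine Finset.sum_congr rfl fun i _ => ?_
    have : w j i = B i j := rfl
    rw [this, hB]
  have hprodc : ∏ j, ‖w j‖ ^ 2 = (∏ k : Fin m, c (Sum.inl k)) * ∏ k : Fin (n - m), c (Sum.inr k) := by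
    calc ∏ j, ‖w j‖ ^ 2 = ∏ j, c (e.symm j) := Finset.prod_congr rfl fun j _ => hwc j
      _ = ∏ x, c x := Equiv.prod_comp e.symm c
      _ = _ := Fintype.prod_sum_type c
  have hcnonneg : ∀ x, 0 ≤ c x := fun x => Finset.sum_nonneg fun i _ => sq_nonneg _
  have hsum1 : ∑ k : Fin m, c (Sum.inl k)
      = ∑ i, ‖(Submodule.orthogonalProjectionOnto W (a i) : (EuclideanSpace ℝ (Fin n)))‖ ^ 2 := by
    rw [Finset.sum_comm]
    refine Finset.sum_congr rfl fun i _ => ?_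
    rw [normSq_proj W bW (a i)]
    rfl
  have hsum2 : ∑ k : Fin (n - m), c (Sum.inr k)
      = ∑ i, ‖a i - (Submodule.orthogonalProjectionOnto W (a i) : (EuclideanSpace ℝ (Fin n)))‖ ^ 2 := by
    rw [Finset.sum_comm]
    refine Finset.sum_congr rfl fun i _ => ?_
    rw [show a i - (Submodule.orthogonalProjectionOnto W (a i) : EuclideanSpace ℝ (Fin n)) = (Submodule.orthogonalProjectionOnto Wᗮ (a i) : EuclideanSpace ℝ (Fin n)) from by rw [Submodule.orthogonalProjectionOnto_orthogonal]; rfl]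
    rw [normSq_proj (Wᗮ) bO (a i)]
    rfl
  -- AM-GM on the two blocks
  have h₁ : ∏ k : Fin m, c (Sum.inl k) ≤
      ((1 / (m : ℝ)) * ∑ i, ‖(Submodule.orthogonalProjectionOnto W (a i) : (EuclideanSpace ℝ (Fin n)))‖ ^ 2) ^ m := by
    have := amgm_prod_le (fun k : Fin m => c (Sum.inl k)) (fun k => hcnonneg _)
      (by simpa using hm)
    simpa [Fintype.card_fin, hsum1, div_eq_inv_mul, one_div] using this
  have h₂ : ∏ k : Fin (n - m), c (Sum.inr k) ≤
      ((1 / ((n : ℝ) - m)) * ∑ i, ‖a i - (Submodule.orthogonalProjectionOnto W (a i) : (EuclideanSpace ℝ (Fin n)))‖ ^ 2) ^ (n - m) := by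
    have hcast : ((n - m : ℕ) : ℝ) = (n : ℝ) - m := by
      rw [Nat.cast_sub hmn.le]
    have := amgm_prod_le (fun k : Fin (n - m) => c (Sum.inr k)) (fun k => hcnonneg _)
      (by simp [Fintype.card_fin]; omega)
    simpa [Fintype.card_fin, hsum2, hcast, div_eq_inv_mul, one_div] using this
  -- Left-hand side
  have hdetA : A.det = ∏ i, A i i := by
    apply Matrix.det_of_lowerTriangular
    intro i j hij
    exact hA i j hij
  have hLHS : ∏ i : Fin n, (A i i) ^ 2 = B.det ^ 2 := by
    rw [hBdef, Matrix.det_mul, mul_pow, hdetU, mul_one, hdetA, Finset.prod_pow]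
  calc ∏ i : Fin n, (A i i) ^ 2 = B.det ^ 2 := hLHS
    _ ≤ ∏ j, ‖w j‖ ^ 2 := hHad
    _ = (∏ k : Fin m, c (Sum.inl k)) * ∏ k : Fin (n - m), c (Sum.inr k) := hprodc
    _ ≤ _ := by
        apply mul_le_mul h₁ h₂
        · exact Finset.prod_nonneg fun k _ => hcnonneg _
        · positivity
end
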